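/- Let f be a Fréchet differentiable pseudolinear function on an open convex set S in a real Banach space E. Then f is semistrictly quasilinear on S: for all x, y ∈ S and λ ∈ (0,1), f(y) < f(x) implies f(y) < f(x + λ(y − x)) < f(x). -/

import Mathlib

open Set Filter Topology

def Pseudoconvex {E : Type*} [NormedAddCommGroup E] [NormedSpace ℝ E]
    (S : Set E) (f : E → ℝ) (f' : E → E →L[ℝ] ℝ) : Prop :=
  ∀ x ∈ S, ∀ y ∈ S, f y < f x → f' x (y - x) < 0

def Pseudolinear {E : Type*} [NormedAddCommGroup E] [NormedSpace ℝ E]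
    (S : Set E) (f : E → ℝ) (f' : E → E →L[ℝ] ℝ) : Prop :=
  Pseudoconvex S f f' ∧ Pseudoconvex S (fun x => -f x) (fun x => -(f' x))

lemma aux18 {E : Type*} [NormedAddCommGroup E] [NormedSpace ℝ E]
    {S : Set E} (hSc : Convex ℝ S)
    (f : E → ℝ) (f' : E → E →L[ℝ] ℝ)
    (hdiff : ∀ x ∈ S, HasFDerivAt f (f' x) x)
    (hpc : Pseudoconvex S f f')
    (hpc' : Pseudoconvex S (fun x => -f x) (fun x => -(f' x)))
    {a b : E} (ha : a ∈ S) (hb : b ∈ S) {l : ℝ} (hl : l ∈ Set.Ioo (0:ℝ) 1)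
    (hba : f b < f a) : f (a + l • (b - a)) < f a := by
  set z := a + l • (b - a) with hzdef
  have hz : z ∈ S := hSc.add_smul_sub_mem ha hb ⟨hl.1.le, hl.2.le⟩
  by_contra hcon
  push_neg at hcon
  have hderiv_ba : f' a (b - a) < 0 := hpc a ha b hb hba
  have hbz : f b < f z := lt_of_lt_of_le hba hcon
  have h1 : f' z (b - z) < 0 := hpc z hz b hb hbz
  have hbz_eq : b - z = (1 - l) • (b - a) := by rw [hzdef]; module
  have h2 : f' z (b - a) < 0 := by
    rw [hbz_eq, map_smul, smul_eq_mul] at h1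
    nlinarith [hl.2]
  rcases eq_or_lt_of_le hcon with heq | hlt
  · -- f a = f z
    set v := a - z with hvdef
    have hfv : 0 < f' z v := by
      have hveq : v = (-l) • (b - a) := by rw [hvdef, hzdef]; module
      rw [hveq, map_smul, smul_eq_mul]
      nlinarith [hl.1]
    have hline : HasDerivAt (fun t : ℝ => z + t • v) v 0 := by
      simpa using ((hasDerivAt_id (0:ℝ)).smul_const v).const_add z
    have hd : HasDerivAt (fun t : ℝ => f (z + t • v)) (f' z v) 0 := by
      have hfz : HasFDerivAt f (f' z) ((fun t : ℝ => z + t • v) 0) := by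
        simpa using hdiff z hz
      exact hfz.comp_hasDerivAt 0 hline
    have hten : Tendsto (slope (fun t : ℝ => f (z + t • v)) 0) (𝓝[>] (0:ℝ))
        (𝓝 (f' z v)) :=
      (hasDerivAt_iff_tendsto_slope.mp hd).mono_left
        (nhdsWithin_mono _ fun t ht => Set.mem_compl_singleton_iff.mpr (ne_of_gt ht))
    have hev : ∀ᶠ t in 𝓝[>] (0:ℝ),
        0 < slope (fun t : ℝ => f (z + t • v)) 0 t :=
      hten.eventually (eventually_gt_nhds hfv)
    have hev2 : ∀ᶠ t in 𝓝[>] (0:ℝ), t ∈ Ioo (0:ℝ) 1 :=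
      Ioo_mem_nhdsGT_of_mem ⟨le_rfl, one_pos⟩
    obtain ⟨t, hst, htI⟩ := (hev.and hev2).exists
    have hgt : f z < f (z + t • v) := by
      rw [slope_def_field] at hst
      have htpos : (0:ℝ) < t - 0 := by simpa using htI.1
      have := (lt_div_iff₀ htpos).mp hst
      simp only [zero_smul, add_zero, zero_mul] at this
      linarith
    have hw : z + t • v ∈ S := hSc.add_smul_sub_mem hz ha ⟨htI.1.le, htI.2.le⟩
    have hfaw : f a < f (z + t • v) := heq ▸ hgt
    have hneg : -(f' a) ((z + t • v) - a) < 0 := by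
      exact hpc' a ha (z + t • v) hw (by simpa using neg_lt_neg hfaw)
    have hwa : (z + t • v) - a = ((1 - t) * l) • (b - a) := by
      rw [hvdef, hzdef]; module
    rw [hwa, map_smul, smul_eq_mul] at hneg
    nlinarith [mul_pos (mul_pos (sub_pos.mpr htI.2) hl.1) (neg_pos.mpr hderiv_ba)]
  · have h3 : f' z (a - z) < 0 := hpc z hz a ha hlt
    have haz : a - z = (-l) • (b - a) := by rw [hzdef]; module
    rw [haz, map_smul, smul_eq_mul] at h3
    nlinarith [hl.1, h2, mul_pos hl.1 (neg_pos.mpr h2)]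

theorem stmt_18 {E : Type*} [NormedAddCommGroup E] [NormedSpace ℝ E] [CompleteSpace E]
    {S : Set E} (hSo : IsOpen S) (hSc : Convex ℝ S)
    (f : E → ℝ) (f' : E → E →L[ℝ] ℝ)
    (hdiff : ∀ x ∈ S, HasFDerivAt f (f' x) x)
    (hpl : Pseudolinear S f f') :
    ∀ x ∈ S, ∀ y ∈ S, ∀ l ∈ Set.Ioo (0:ℝ) 1, f y < f x →
      f y < f (x + l • (y - x)) ∧ f (x + l • (y - x)) < f x := by
  intro x hx y hy l hl hyx
  refine ⟨?_, ?_⟩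
  · have hpc' : Pseudoconvex S (fun x => - -f x) (fun x => -(-(f' x))) := by
      intro p hp q hq hlt
      simp only [neg_neg] at hlt ⊢
      simpa using hpl.1 p hp q hq hlt
    have hpt : y + (1 - l) • (x - y) = x + l • (y - x) := by module
    have := aux18 hSc (fun x => -f x) (fun x => -(f' x))
      (fun p hp => (hdiff p hp).neg) hpl.2 hpc' hy hx
      (l := 1 - l) ⟨by linarith [hl.2], by linarith [hl.1]⟩
      (by simpa using neg_lt_neg hyx)
    rw [hpt] at this
    simpa using neg_lt_neg this
  · exact aux18 hSc f f' hdiff hpl.1 hpl.2 hx hy hl hyx
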